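/- Let n be a positive integer, let m be an index with 0 ≤ m ≤ n-1, and let D be a set of pairs (a,b) of indices in {0, …, n-1} with b < m < a. Let H be the directed graph on {0, …, n-1} with edges k → k+1 for all k < n-1 and an edge a → b for every (a,b) ∈ D. Suppose v ≤ u are indices and there is a walk in H from u to v all of whose vertices are at least v. Then there is a walk in H from u to v, all of whose vertices are at least v, that uses at most two edges of D; moreover, either v = u and no D-edge is used, or exactly one D-edge (a,v) with u ≤ a is used, or exactly two D-edges are used, first a₁ → b₁ and then a₂ → b₂, with b₂ = v, u ≤ a₁, and b₂ < b₁ < a₂ < a₁ (i.e., the two detours cross). -/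

import Mathlib

/-- A walk in the directed graph with edge relation `E`: a nonempty list of vertices
starting at `u`, ending at `v`, with every consecutive pair an edge. -/
def IsWalk {V : Type*} (E : V → V → Prop) (l : List V) (u v : V) : Prop :=
  l ≠ [] ∧ l.head? = some u ∧ l.getLast? = some v ∧ l.Chain' E

/-- In the graph `H` on `{0,…,n-1}` with successor edges and detour edges
`D` (each detour `(a,b)` having `b < m < a`), any walk from `u` to `v ≤ u` staying at
vertices `≥ v` can be replaced by one using at most two detour edges, with the stated
case structure (no detour and `v = u`; one detour `(a,v)` with `u ≤ a`; or two crossing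
detours, the second ending at `v`). -/
lemma walk_cons {E : ℕ → ℕ → Prop} {l : List ℕ} {u v x : ℕ}
    (h : IsWalk E l u v) (he : E x u) :
    IsWalk E (x :: l) x v ∧ (x :: l).zip l = (x, u) :: l.zip l.tail := by
  obtain ⟨hne, hh, hl, hc⟩ := h
  obtain ⟨a, t, rfl⟩ := List.exists_cons_of_ne_nil hne
  simp only [List.head?_cons, Option.some.injEq] at hh
  subst hh
  refine ⟨⟨List.cons_ne_nil _ _, rfl, ?_, ?_⟩, rfl⟩
  · simpa using hl
  · exact List.isChain_cons_cons.mpr ⟨he, hc⟩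

lemma walk_append {E : ℕ → ℕ → Prop} {l l' : List ℕ} {u w v : ℕ}
    (h1 : IsWalk E l u w) (h2 : IsWalk E l' w v) :
    IsWalk E (l ++ l'.tail) u v ∧
      (l ++ l'.tail).zip (l ++ l'.tail).tail = l.zip l.tail ++ l'.zip l'.tail := by
  induction l generalizing u with
  | nil => exact absurd rfl h1.1
  | cons x t ih =>
    obtain ⟨-, hh, hl, hc⟩ := h1
    simp only [List.head?_cons, Option.some.injEq] at hh
    subst hh
    rcases t with _ | ⟨y, t⟩
    · simp only [List.getLast?_singleton, Option.some.injEq] at hl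
      subst hl
      obtain ⟨hne2, hh2, hl2, hc2⟩ := h2
      obtain ⟨b, t', rfl⟩ := List.exists_cons_of_ne_nil hne2
      simp only [List.head?_cons, Option.some.injEq] at hh2
      subst hh2
      exact ⟨⟨List.cons_ne_nil _ _, rfl, hl2, hc2⟩, rfl⟩
    · have hy : IsWalk E (y :: t) y w := by
        refine ⟨List.cons_ne_nil _ _, rfl, ?_, (List.isChain_cons_cons.mp hc).2⟩
        simpa using hl
      obtain ⟨⟨hne3, hh3, hl3, hc3⟩, hz⟩ := ih hy
      refine ⟨⟨List.cons_ne_nil _ _, rfl, ?_, ?_⟩, ?_⟩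
      · simp only [List.cons_append, List.getLast?_cons_cons] at hl3 ⊢
        exact hl3
      · exact List.isChain_cons_cons.mpr ⟨(List.isChain_cons_cons.mp hc).1, hc3⟩
      · simp only [List.cons_append, List.tail_cons, List.zip_cons_cons] at hz ⊢
        rw [hz]

lemma seg_spec {E : ℕ → ℕ → Prop} {n : ℕ} (hE : ∀ k, k + 1 < n → E k (k + 1)) :
    ∀ d a, a + d < n → IsWalk E (List.range' a (d + 1)) a (a + d) ∧
      ∀ p ∈ (List.range' a (d + 1)).zip (List.range' a (d + 1)).tail, p.2 = p.1 + 1 := by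
  intro d
  induction d with
  | zero =>
    intro a ha
    refine ⟨⟨by simp, by simp, by simp, by simp; exact List.isChain_singleton a⟩, by simp⟩
  | succ d ih =>
    intro a ha
    have h1 : (a + 1) + d < n := by omega
    obtain ⟨hw, hz⟩ := ih (a + 1) h1
    have hr : List.range' a (d + 2) = a :: List.range' (a + 1) (d + 1) := by
      rw [List.range'_succ]
    have he : E a (a + 1) := hE a (by omega)
    obtain ⟨hw2, hz2⟩ := walk_cons hw he
    rw [hr]
    constructor
    · have : a + (d + 1) = (a + 1) + d := by omega
      rw [this]; exact hw2
    · intro p hp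
      have htl : (a :: List.range' (a + 1) (d + 1)).tail = List.range' (a + 1) (d + 1) := rfl
      rw [htl, hz2] at hp
      rcases List.mem_cons.mp hp with h | h
      · simp [h]
      · exact hz p h

lemma last_step {E : ℕ → ℕ → Prop} :
    ∀ (l : List ℕ) (u v : ℕ), IsWalk E l u v → 2 ≤ l.length → ∃ x ∈ l, E x v := by
  intro l
  induction l with
  | nil => intro u v h; exact absurd rfl h.1
  | cons x t ih =>
    intro u v h hlen
    rcases t with _ | ⟨y, t⟩
    · simp at hlen
    · obtain ⟨-, hh, hl, hc⟩ := h
      rcases t with _ | ⟨z, t⟩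
      · simp only [List.getLast?_cons_cons, List.getLast?_singleton,
          Option.some.injEq] at hl
        subst hl
        exact ⟨x, by simp, (List.isChain_cons_cons.mp hc).1⟩
      · have hy : IsWalk E (y :: z :: t) y v := by
          refine ⟨List.cons_ne_nil _ _, rfl, ?_, (List.isChain_cons_cons.mp hc).2⟩
          simpa using hl
        obtain ⟨w, hw, hew⟩ := ih y v hy (by simp)
        exact ⟨w, List.mem_cons_of_mem _ hw, hew⟩

lemma first_detour {n : ℕ} {D : Finset (ℕ × ℕ)} :
    ∀ (l : List ℕ) (u v : ℕ),
      IsWalk (fun a c => (a + 1 < n ∧ c = a + 1) ∨ (a, c) ∈ D) l u v → v < u →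
      ∃ a b, (a, b) ∈ D ∧ u ≤ a ∧ b ∈ l := by
  intro l
  induction l with
  | nil => intro u v h; exact absurd rfl h.1
  | cons x t ih =>
    intro u v h hvu
    obtain ⟨-, hh, hl, hc⟩ := h
    simp only [List.head?_cons, Option.some.injEq] at hh
    subst hh
    rcases t with _ | ⟨y, t⟩
    · simp only [List.getLast?_singleton, Option.some.injEq] at hl
      omega
    · rcases (List.isChain_cons_cons.mp hc).1 with ⟨-, hsucc⟩ | hd
      · have hy : IsWalk (fun a c => (a + 1 < n ∧ c = a + 1) ∨ (a, c) ∈ D) (y :: t) y v := by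
          refine ⟨List.cons_ne_nil _ _, rfl, ?_, (List.isChain_cons_cons.mp hc).2⟩
          simpa using hl
        obtain ⟨a, b, hab, hua, hbl⟩ := ih y v hy (by omega)
        exact ⟨a, b, hab, by omega, List.mem_cons_of_mem _ hbl⟩
      · exact ⟨x, y, hd, le_refl x, by simp⟩

theorem stmt_10 (n : ℕ) (hn : 0 < n) (m : ℕ) (hm : m ≤ n - 1)
    (D : Finset (ℕ × ℕ)) (hD : ∀ q ∈ D, q.2 < m ∧ m < q.1 ∧ q.1 < n) :
    let H : ℕ → ℕ → Prop := fun a c => (a + 1 < n ∧ c = a + 1) ∨ (a, c) ∈ D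
    ∀ u v : ℕ, v ≤ u → u < n →
      (∃ l, IsWalk H l u v ∧ ∀ x ∈ l, v ≤ x) →
      ∃ l, IsWalk H l u v ∧ (∀ x ∈ l, v ≤ x) ∧
        ((v = u ∧ (l.zip l.tail).filter (fun q => decide (q ∈ D)) = []) ∨
         (∃ a, u ≤ a ∧ (a, v) ∈ D ∧
           (l.zip l.tail).filter (fun q => decide (q ∈ D)) = [(a, v)]) ∨
         (∃ a₁ b₁ a₂ b₂, (a₁, b₁) ∈ D ∧ (a₂, b₂) ∈ D ∧ b₂ = v ∧ u ≤ a₁ ∧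
           b₂ < b₁ ∧ b₁ < a₂ ∧ a₂ < a₁ ∧
           (l.zip l.tail).filter (fun q => decide (q ∈ D)) = [(a₁, b₁), (a₂, b₂)])) := by

  intro H u v hvu hun hex
  obtain ⟨l, hw, hmem⟩ := hex
  have hE : ∀ k, k + 1 < n → H k (k + 1) := fun k hk => Or.inl ⟨hk, rfl⟩
  have hsuccD : ∀ k : ℕ, (k, k + 1) ∉ D := by
    intro k hk
    have := hD _ hk
    simp only at this
    omega
  rcases eq_or_lt_of_le hvu with rfl | hlt
  · -- case v = u
    refine ⟨[v], ⟨by simp, rfl, rfl, List.isChain_singleton v⟩, by simp, Or.inl ⟨rfl, by simp⟩⟩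
  · -- v < u : analyze the given walk
    -- fact A: some detour ends at v
    have hlen : 2 ≤ l.length := by
      obtain ⟨hne, hh, hl, -⟩ := hw
      rcases l with _ | ⟨x, t⟩
      · exact absurd rfl hne
      · rcases t with _ | ⟨y, t⟩
        · simp only [List.head?_cons, List.getLast?_singleton, Option.some.injEq] at hh hl
          omega
        · simp
    obtain ⟨x, hxl, hxv⟩ := last_step l u v hw hlen
    have factA : ∃ a, (a, v) ∈ D := by
      rcases hxv with ⟨-, hx⟩ | hx
      · have := hmem x hxl; omega
      · exact ⟨x, hx⟩
    obtain ⟨a₁, b₁, hab₁, hua₁, hb₁l⟩ := first_detour l u v hw hlt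
    have hvb₁ : v ≤ b₁ := hmem b₁ hb₁l
    by_cases hcase : ∃ a, u ≤ a ∧ (a, v) ∈ D
    · -- one detour suffices
      obtain ⟨a, hua, hav⟩ := hcase
      have hbd := hD _ hav
      simp only at hbd
      have han : a < n := hbd.2.2
      obtain ⟨hw1, hz1⟩ := seg_spec hE (a - u) u (by omega)
      have heq : u + (a - u) = a := by omega
      rw [heq] at hw1
      have hw2 : IsWalk H [a, v] a v :=
        ⟨by simp, rfl, by simp, List.isChain_pair.mpr (Or.inr hav)⟩
      obtain ⟨hw3, hz3⟩ := walk_append hw1 hw2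
      refine ⟨_, hw3, ?_, Or.inr (Or.inl ⟨a, hua, hav, ?_⟩)⟩
      · intro y hy
        rcases List.mem_append.mp hy with hy | hy
        · have := List.mem_range'_1.mp hy; omega
        · simp only [List.tail_cons, List.mem_singleton] at hy
          omega
      · rw [hz3, List.filter_append]
        have h1 : List.filter (fun q => decide (q ∈ D))
            ((List.range' u (a - u + 1)).zip (List.range' u (a - u + 1)).tail) = [] := by
          rw [List.filter_eq_nil_iff]
          intro p hp
          have := hz1 p hp
          simp only [decide_eq_true_eq]
          intro hpD
          have hp2 : ((p.1, p.1 + 1) : ℕ × ℕ) ∈ D := by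
            rwa [← this, Prod.mk.eta]
          exact hsuccD _ hp2
        rw [h1]
        simp [hav]
    · -- two detours needed
      push_neg at hcase
      obtain ⟨a₂, ha₂v⟩ := factA
      have ha₂u : a₂ < u := by
        by_contra h
        exact hcase a₂ (by omega) ha₂v
      have hb₁v : v < b₁ := by
        rcases eq_or_lt_of_le hvb₁ with rfl | h
        · exact absurd hab₁ (hcase a₁ hua₁)
        · exact h
      have hbd₁ := hD _ hab₁
      have hbd₂ := hD _ ha₂v
      simp only at hbd₁ hbd₂
      -- walk: u → a₁ (succ), a₁ → b₁ (detour), b₁ → a₂ (succ), a₂ → v (detour)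
      obtain ⟨hw1, hz1⟩ := seg_spec hE (a₁ - u) u (by omega)
      have heq1 : u + (a₁ - u) = a₁ := by omega
      rw [heq1] at hw1
      obtain ⟨hwS, hzS⟩ := seg_spec hE (a₂ - b₁) b₁ (by omega)
      have heq2 : b₁ + (a₂ - b₁) = a₂ := by omega
      rw [heq2] at hwS
      obtain ⟨hw2, hz2⟩ := walk_cons hwS (Or.inr hab₁ : H a₁ b₁)
      have hw3 : IsWalk H [a₂, v] a₂ v :=
        ⟨by simp, rfl, by simp, List.isChain_pair.mpr (Or.inr ha₂v)⟩
      obtain ⟨hw23, hz23⟩ := walk_append hw2 hw3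
      obtain ⟨hwT, hzT⟩ := walk_append hw1 hw23
      refine ⟨_, hwT, ?_, Or.inr (Or.inr ⟨a₁, b₁, a₂, v, hab₁, ha₂v, rfl, hua₁,
        hb₁v, by omega, by omega, ?_⟩)⟩
      · intro y hy
        rcases List.mem_append.mp hy with hy | hy
        · have := List.mem_range'_1.mp hy; omega
        · have hy' := List.mem_of_mem_tail hy
          rcases List.mem_append.mp hy' with hy' | hy'
          · rcases List.mem_cons.mp hy' with rfl | hy'
            · omega
            · have := List.mem_range'_1.mp hy'; omega
          · simp only [List.tail_cons, List.mem_singleton] at hy'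
            omega
      · rw [hzT, hz23, List.filter_append, List.filter_append]
        have hfil : ∀ (s len : ℕ),
            (∀ p ∈ (List.range' s len).zip (List.range' s len).tail, p.2 = p.1 + 1) →
            List.filter (fun q => decide (q ∈ D))
              ((List.range' s len).zip (List.range' s len).tail) = [] := by
          intro s len hchar
          rw [List.filter_eq_nil_iff]
          intro p hp
          have := hchar p hp
          simp only [decide_eq_true_eq]
          intro hpD
          have hp2 : ((p.1, p.1 + 1) : ℕ × ℕ) ∈ D := by
            rwa [← this, Prod.mk.eta]
          exact hsuccD _ hp2
        rw [hfil _ _ hz1]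
        simp only [List.tail_cons]
        rw [hz2, List.filter_cons]
        simp only [hab₁, decide_true, ha₂v]
        rw [hfil _ _ hzS]
        simp [ha₂v]
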